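/- arXiv:1406.1796 — 2 statements merged into one kernel-verified Lean document; each statement's English description precedes it below -/
import Mathlib

section
/- Define bitsize : ℕ → ℕ by bitsize(0) = 0 and, for n > 0 with c'(n) = (i,j), bitsize(n) = 1 + i + bitsize(j). Then for every natural number n, bitsize(n) equals the number of binary digits of n (Nat.size n), i.e., the recursive run-length-based size function computes the length of the binary representation. -/
/-- The pairing function `c`. -/
def c (i j : ℕ) : ℕ := if Odd j then 2 ^ (i + 1) * j else 2 ^ (i + 1) * (j + 1) - 1

/-- The inverse of `c` on positive naturals (returns `(0,0)` at `0`). -/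
def c' (n : ℕ) : ℕ × ℕ :=
  (padicValNat 2 (n + n % 2) - 1, (n + n % 2) / 2 ^ padicValNat 2 (n + n % 2) - n % 2)

lemma c'_fst_lt {n : ℕ} (hn : 0 < n) : (c' n).1 < n := by
  have hm : 0 < n + n % 2 := by omega
  have hdvd : (2 : ℕ) ^ padicValNat 2 (n + n % 2) ∣ (n + n % 2) := pow_padicValNat_dvd
  have hle : (2 : ℕ) ^ padicValNat 2 (n + n % 2) ≤ n + n % 2 := Nat.le_of_dvd hm hdvd
  have hlt : padicValNat 2 (n + n % 2) < 2 ^ padicValNat 2 (n + n % 2) := Nat.lt_two_pow_self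
  simp only [c']
  generalize hv : padicValNat 2 (n + n % 2) = v at *
  generalize hp : (2 : ℕ) ^ v = p at *
  omega

lemma c'_snd_lt {n : ℕ} (hn : 0 < n) : (c' n).2 < n := by
  have hm : 0 < n + n % 2 := by omega
  have h2 : (2 : ℕ) ∣ (n + n % 2) := by omega
  have hv : 1 ≤ padicValNat 2 (n + n % 2) := one_le_padicValNat_of_dvd hm.ne' h2
  have h2le : (2 : ℕ) ≤ 2 ^ padicValNat 2 (n + n % 2) := by
    calc (2:ℕ) = 2 ^ 1 := (pow_one 2).symm
    _ ≤ 2 ^ padicValNat 2 (n + n % 2) := Nat.pow_le_pow_right (by norm_num) hv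
  have hle : (n + n % 2) / 2 ^ padicValNat 2 (n + n % 2) ≤ (n + n % 2) / 2 :=
    Nat.div_le_div_left h2le (by norm_num)
  simp only [c']
  generalize hq : (n + n % 2) / 2 ^ padicValNat 2 (n + n % 2) = q at *
  omega

lemma c'_fst_lt_of_lt {m n : ℕ} (h : m < n) : (c' m).1 < n := by
  rcases Nat.eq_zero_or_pos m with rfl | hm
  · simp [c']; omega
  · exact lt_trans (c'_fst_lt hm) h

lemma c'_snd_lt_of_lt {m n : ℕ} (h : m < n) : (c' m).2 < n := by
  rcases Nat.eq_zero_or_pos m with rfl | hm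
  · simp [c']; omega
  · exact lt_trans (c'_snd_lt hm) h

def bitsize : ℕ → ℕ
  | 0 => 0
  | n + 1 => 1 + (c' (n + 1)).1 + bitsize (c' (n + 1)).2
  decreasing_by
  · exact c'_snd_lt (Nat.succ_pos n)

lemma size_eq_aux {k n : ℕ} (h1 : 2 ^ k ≤ n) (h2 : n < 2 ^ (k + 1)) : Nat.size n = k + 1 :=
  le_antisymm (Nat.size_le.2 h2) (Nat.lt_size.2 h1)

lemma key {n : ℕ} (hn : 0 < n) :
    Nat.size n = padicValNat 2 (n + n % 2) + Nat.size ((c' n).2) := by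
  set m := n + n % 2 with hm_def
  set v := padicValNat 2 m with hv_def
  have hm : m ≠ 0 := by omega
  have hdvd : 2 ^ v ∣ m := pow_padicValNat_dvd
  have hndvd : ¬ 2 ^ (v + 1) ∣ m := pow_succ_padicValNat_not_dvd hm
  have hv1 : 1 ≤ v := one_le_padicValNat_of_dvd (by omega) (by omega)
  set q := m / 2 ^ v with hq_def
  have hmq : m = 2 ^ v * q := (Nat.mul_div_cancel' hdvd).symm
  have hqodd : q % 2 = 1 := by
    rcases Nat.even_or_odd q with ⟨t, ht⟩ | ho
    · exact absurd ⟨t, by rw [hmq, ht]; ring⟩ hndvd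
    · obtain ⟨t, ht⟩ := ho; omega
  have hqpos : 0 < q := by
    rcases Nat.eq_zero_or_pos q with h | h
    · omega
    · exact h
  have hj : (c' n).2 = q - n % 2 := rfl
  rw [hj]
  rcases Nat.even_or_odd n with he | ho
  · -- n even
    have h2 : n % 2 = 0 := by
      obtain ⟨t, ht⟩ := he; omega
    have hmn : m = n := by omega
    simp only [h2, Nat.sub_zero]
    set s := Nat.size q with hs_def
    have hs1 : 1 ≤ s := Nat.size_pos.2 hqpos
    have hlb : 2 ^ (s - 1) ≤ q := Nat.lt_size.1 (by omega)
    have hub : q < 2 ^ s := Nat.lt_size_self q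
    have hA : 2 ^ (v + s - 1) ≤ m := by
      calc 2 ^ (v + s - 1) = 2 ^ v * 2 ^ (s - 1) := by rw [← pow_add]; congr 1; omega
      _ ≤ 2 ^ v * q := Nat.mul_le_mul_left _ hlb
      _ = m := hmq.symm
    have hB : m < 2 ^ (v + s) := by
      have h1 : 2 ^ v * (q + 1) ≤ 2 ^ v * 2 ^ s := Nat.mul_le_mul_left _ (by omega)
      have h2 : 2 ^ v * (q + 1) = 2 ^ v * q + 2 ^ v := by ring
      have h3 : (1 : ℕ) ≤ 2 ^ v := Nat.one_le_two_pow
      have h4 : 2 ^ v * 2 ^ s = 2 ^ (v + s) := (pow_add 2 v s).symm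
      omega
    have := size_eq_aux (n := n) (k := v + s - 1) (by omega) (by rw [show v + s - 1 + 1 = v + s by omega]; omega)
    omega
  · -- n odd
    have h2 : n % 2 = 1 := by
      obtain ⟨t, ht⟩ := ho; omega
    have hmn : m = n + 1 := by omega
    simp only [h2]
    rcases eq_or_lt_of_le (show 1 ≤ q from hqpos) with hq1 | hq2
    · -- q = 1
      have hj0 : q - 1 = 0 := by omega
      rw [hj0, Nat.size_zero, Nat.add_zero]
      have hm2 : m = 2 ^ v := by rw [hmq, show q = 1 by omega, mul_one]
      have hpow : 2 ^ (v - 1) * 2 = 2 ^ v := by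
        rw [← pow_succ]; congr 1; omega
      have h3 : (1 : ℕ) ≤ 2 ^ (v - 1) := Nat.one_le_two_pow
      have := size_eq_aux (n := n) (k := v - 1) (by omega)
        (by rw [show v - 1 + 1 = v by omega]; omega)
      omega
    · -- q ≥ 2
      set j := q - 1 with hj_def
      have hjpos : 0 < j := by omega
      set s := Nat.size j with hs_def
      have hs1 : 1 ≤ s := Nat.size_pos.2 hjpos
      have hlb : 2 ^ (s - 1) ≤ j := Nat.lt_size.1 (by omega)
      have hub : j < 2 ^ s := Nat.lt_size_self j
      have hvpos : (1 : ℕ) ≤ 2 ^ v := Nat.one_le_two_pow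
      have hqj : q = j + 1 := by omega
      have hmjj : m = 2 ^ v * j + 2 ^ v := by rw [hmq, hqj]; ring
      have hA : 2 ^ (v + s - 1) ≤ 2 ^ v * j := by
        calc 2 ^ (v + s - 1) = 2 ^ v * 2 ^ (s - 1) := by rw [← pow_add]; congr 1; omega
        _ ≤ 2 ^ v * j := Nat.mul_le_mul_left _ hlb
      have hB : m ≤ 2 ^ (v + s) := by
        have h1 : 2 ^ v * (j + 1) ≤ 2 ^ v * 2 ^ s := Nat.mul_le_mul_left _ (by omega)
        have h4 : 2 ^ v * 2 ^ s = 2 ^ (v + s) := (pow_add 2 v s).symm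
        have h2 : 2 ^ v * (j + 1) = 2 ^ v * j + 2 ^ v := by ring
        omega
      have := size_eq_aux (n := n) (k := v + s - 1) (by omega)
        (by rw [show v + s - 1 + 1 = v + s by omega]; omega)
      omega

theorem bitsize_eq_size (n : ℕ) : bitsize n = Nat.size n := by
  induction n using Nat.strong_induction_on with
  | _ n ih =>
    match n with
    | 0 => simp [bitsize]
    | Nat.succ k =>
      rw [bitsize]
      have hpos : 0 < k + 1 := Nat.succ_pos k
      have hv1 : 1 ≤ padicValNat 2 ((k + 1) + (k + 1) % 2) :=
        one_le_padicValNat_of_dvd (by omega) (by omega)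
      have hfst : (c' (k + 1)).1 = padicValNat 2 ((k + 1) + (k + 1) % 2) - 1 := rfl
      rw [ih _ (c'_snd_lt hpos), key hpos, hfst]
      simp only [Nat.succ_eq_add_one] at *
      omega
end

section
/- The Collatz conjecture holds if and only if every syracuse iteration terminates at 0: (for every natural number x ≥ 1 there exists k with collatz^[k](x) = 1) if and only if (for every natural number n there exists k with syracuse^[k](n) = 0). -/
/-- The Collatz function. -/
def collatz (x : ℕ) : ℕ := if x % 2 = 0 then x / 2 else 3 * x + 1

/-- `tl m = ((m / 2^(ν₂ m)) − 1) / 2`: the encoding of the odd part of `m`. -/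
def tl (m : ℕ) : ℕ := (m / 2 ^ padicValNat 2 m - 1) / 2

/-- The syracuse function on the encodings of odd numbers. -/
def syracuse (n : ℕ) : ℕ := tl (3 * n + 2)

lemma odd_ordCompl (m : ℕ) (hm : m ≠ 0) : ¬ 2 ∣ m / 2 ^ padicValNat 2 m := by
  have := Nat.not_dvd_ordCompl Nat.prime_two hm
  rwa [Nat.factorization_def _ Nat.prime_two] at this

lemma two_tl_add_one (m : ℕ) (hm : m ≠ 0) :
    2 * tl m + 1 = m / 2 ^ padicValNat 2 m := by
  have h := odd_ordCompl m hm
  have ho : (m / 2 ^ padicValNat 2 m) % 2 = 1 := by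
    rcases Nat.mod_two_eq_zero_or_one (m / 2 ^ padicValNat 2 m) with h2 | h2
    · exact absurd (Nat.dvd_of_mod_eq_zero h2) h
    · exact h2
  show 2 * ((m / 2 ^ padicValNat 2 m - 1) / 2) + 1 = m / 2 ^ padicValNat 2 m
  generalize m / 2 ^ padicValNat 2 m = o at ho ⊢
  omega

lemma collatz_halving (j : ℕ) : ∀ m : ℕ, m ≠ 0 → j ≤ padicValNat 2 m →
    collatz^[j] m = m / 2 ^ j := by
  induction j with
  | zero => simp
  | succ j ih =>
    intro m hm hj
    rw [Function.iterate_succ_apply', ih m hm (Nat.le_of_succ_le hj)]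
    have hd : 2 ^ (j + 1) ∣ m :=
      dvd_trans (pow_dvd_pow 2 hj) pow_padicValNat_dvd
    obtain ⟨c, hc⟩ := hd
    subst hc
    have h1 : 2 ^ (j + 1) * c / 2 ^ j = 2 * c := by
      rw [pow_succ, mul_assoc,
        Nat.mul_div_cancel_left _ (Nat.pow_pos (by norm_num) : 0 < 2 ^ j)]
    have h2 : 2 ^ (j + 1) * c / 2 ^ (j + 1) = c :=
      Nat.mul_div_cancel_left _ (Nat.pow_pos (by norm_num) : 0 < 2 ^ (j + 1))
    rw [h1, h2]
    simp [collatz, Nat.mul_mod_right]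

lemma collatz_two (n : ℕ) : collatz^[2] (2 * n + 1) = 3 * n + 2 := by
  have h1 : collatz (2 * n + 1) = 6 * n + 4 := by
    have : (2 * n + 1) % 2 = 1 := by omega
    simp [collatz, this]; ring
  have h2 : collatz (6 * n + 4) = 3 * n + 2 := by
    have : (6 * n + 4) % 2 = 0 := by omega
    simp [collatz, this]; omega
  simp [Function.iterate_succ_apply, h1, h2]

lemma collatz_key (n : ℕ) :
    collatz^[2 + padicValNat 2 (3 * n + 2)] (2 * n + 1) = 2 * syracuse n + 1 := by
  rw [add_comm, Function.iterate_add_apply, collatz_two,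
    collatz_halving _ _ (by omega) le_rfl, syracuse,
    two_tl_add_one _ (by omega)]

lemma collatz_lower_bound (n k : ℕ) (hn : n ≠ 0)
    (hk : collatz^[k] (2 * n + 1) = 1) : 2 + padicValNat 2 (3 * n + 2) ≤ k := by
  by_contra h
  push_neg at h
  rcases k with _ | _ | j
  · simp at hk; omega
  · have h1 : collatz (2 * n + 1) = 6 * n + 4 := by
      have : (2 * n + 1) % 2 = 1 := by omega
      simp [collatz, this]; ring
    rw [Function.iterate_one, h1] at hk
    omega
  · have hj : j < padicValNat 2 (3 * n + 2) := by omega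
    have : collatz^[j + 2] (2 * n + 1) = collatz^[j] (3 * n + 2) := by
      rw [Function.iterate_add_apply, collatz_two]
    rw [this, collatz_halving _ _ (by omega) hj.le] at hk
    have hd : 2 ^ j ∣ 3 * n + 2 :=
      dvd_trans (pow_dvd_pow 2 hj.le) pow_padicValNat_dvd
    obtain ⟨c, hc⟩ := hd
    have hc1 : c = 1 := by
      rw [hc, Nat.mul_div_cancel_left _ (Nat.pow_pos (by norm_num) : 0 < 2 ^ j)] at hk
      exact hk
    have : padicValNat 2 (3 * n + 2) = j := by
      rw [hc, hc1, mul_one, padicValNat.prime_pow]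
    omega

theorem collatz_iff_syracuse_terminates :
    (∀ x : ℕ, 1 ≤ x → ∃ k : ℕ, collatz^[k] x = 1) ↔
    (∀ n : ℕ, ∃ k : ℕ, syracuse^[k] n = 0) := by
  constructor
  · intro hC n
    have claim : ∀ k n, collatz^[k] (2 * n + 1) = 1 → ∃ j, syracuse^[j] n = 0 := by
      intro k
      induction k using Nat.strong_induction_on with
      | _ k ih =>
        intro n hk
        rcases Nat.eq_zero_or_pos n with h0 | h0
        · exact ⟨0, by simp [h0]⟩
        · have hle := collatz_lower_bound n k (by omega) hk
          set a := 2 + padicValNat 2 (3 * n + 2) with ha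
          have hk' : collatz^[k - a] (2 * syracuse n + 1) = 1 := by
            rw [← collatz_key n, ← ha, ← Function.iterate_add_apply,
              Nat.sub_add_cancel hle]
            exact hk
          obtain ⟨j, hj⟩ := ih (k - a) (by omega) (syracuse n) hk'
          exact ⟨j + 1, by rw [Function.iterate_succ_apply]; exact hj⟩
    obtain ⟨k, hk⟩ := hC (2 * n + 1) (by omega)
    exact claim k n hk
  · intro hS x hx
    have claim : ∀ j n, syracuse^[j] n = 0 → ∃ k, collatz^[k] (2 * n + 1) = 1 := by
      intro j
      induction j with
      | zero => intro n h; simp at h; exact ⟨0, by simp [h]⟩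
      | succ j ih =>
        intro n h
        rw [Function.iterate_succ_apply] at h
        obtain ⟨k, hk⟩ := ih (syracuse n) h
        refine ⟨k + (2 + padicValNat 2 (3 * n + 2)), ?_⟩
        rw [Function.iterate_add_apply, collatz_key n]
        exact hk
    have hb : collatz^[padicValNat 2 x] x = 2 * tl x + 1 := by
      rw [collatz_halving _ x (by omega) le_rfl, two_tl_add_one x (by omega)]
    obtain ⟨j, hj⟩ := hS (tl x)
    obtain ⟨k, hk⟩ := claim j (tl x) hj
    exact ⟨k + padicValNat 2 x, by rw [Function.iterate_add_apply, hb]; exact hk⟩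
end
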